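/- The sequence d_n defined by H_n = ln(n + 1/2) + γ + 1/(24(n+1/2)^2 + d_n) is strictly monotonically increasing in n ≥ 1. -/

import Mathlib

open Real Filter

open Topology

noncomputable def H (n : ℕ) : ℝ := ∑ i ∈ Finset.range n, (1 : ℝ) / (i + 1)

noncomputable def d (n : ℕ) : ℝ :=
  1 / (H n - Real.log (n + 1 / 2) - Real.eulerMascheroniConstant) - 24 * (n + 1 / 2 : ℝ) ^ 2

namespace Stmt5Aux

noncomputable def f (n : ℕ) : ℝ :=
  H n - Real.log (n + 1 / 2) - Real.eulerMascheroniConstant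

noncomputable def Q (t : ℝ) : ℝ := 24*t^4 + 21/5*t^2 - 2071/1400

noncomputable def hh (n : ℕ) : ℝ := ((n:ℝ)+1/2)^2 / Q ((n:ℝ)+1/2)

noncomputable def SS (n : ℕ) : ℝ :=
  2/3*(1/(2*(n:ℝ)+2))^3 + 2/5*(1/(2*(n:ℝ)+2))^5 + 2/7*(1/(2*(n:ℝ)+2))^7
    + 2/9*(1/(2*(n:ℝ)+2))^9

lemma d_eq (n : ℕ) : d n = 1/(f n) - 24*((n:ℝ)+1/2)^2 := rfl

lemma Q_pos {t : ℝ} (ht : 1/2 ≤ t) : 0 < Q t := by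
  unfold Q; nlinarith [sq_nonneg t, sq_nonneg (t^2 - 1/4), sq_nonneg (t - 1/2)]

lemma hh_pos (n : ℕ) : 0 < hh n := by
  apply div_pos
  · positivity
  · exact Q_pos (by linarith [Nat.cast_nonneg (α := ℝ) n])

lemma log_est (u : ℝ) (h0 : 0 < u) (h1 : u ≤ 1/4) :
    |Real.log (1+u) - Real.log (1-u)
      - (2*u + 2/3*u^3 + 2/5*u^5 + 2/7*u^7 + 2/9*u^9)| ≤ 8/3*u^11 := by
  have hu : |u| < 1 := by rw [abs_of_pos h0]; linarith
  have hu' : |(-u)| < 1 := by rw [abs_neg]; exact hu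
  have A := Real.abs_log_sub_add_sum_range_le hu 10
  have B := Real.abs_log_sub_add_sum_range_le hu' 10
  rw [abs_of_pos h0] at A
  rw [abs_neg, abs_of_pos h0] at B
  simp only [Finset.sum_range_succ, Finset.sum_range_zero] at A B
  norm_num at A B
  have hb1 : u^11/(1-u) ≤ 4/3*u^11 := by
    rw [div_le_iff₀ (by linarith)]
    nlinarith [pow_pos h0 11]
  have key : Real.log (1+u) - Real.log (1-u)
      - (2*u + 2/3*u^3 + 2/5*u^5 + 2/7*u^7 + 2/9*u^9)
      = (-u + u^2/2 + (-u)^3/3 + (-u)^4/4 + (-u)^5/5 + (-u)^6/6 + (-u)^7/7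
          + (-u)^8/8 + (-u)^9/9 + (-u)^10/10 + Real.log (1+u))
        - (u + u^2/2 + u^3/3 + u^4/4 + u^5/5 + u^6/6 + u^7/7 + u^8/8 + u^9/9 + u^10/10
          + Real.log (1-u)) := by ring
  rw [key]
  refine le_trans (abs_sub _ _) ?_
  rw [show (-u)^4 = u^4 by ring, show (-u)^6 = u^6 by ring, show (-u)^8 = u^8 by ring, show (-u)^10 = u^10 by ring]
  linarith [A, B, hb1]

lemma delta_eq (n : ℕ) :
    f n - f (n+1) = Real.log (1 + 1/(2*(n:ℝ)+2)) - Real.log (1 - 1/(2*(n:ℝ)+2))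
      - 2*(1/(2*(n:ℝ)+2)) := by
  have h1 : (0:ℝ) < 2*(n:ℝ)+2 := by positivity
  have e1 : (1:ℝ) + 1/(2*(n:ℝ)+2) = (2*(n:ℝ)+3)/(2*(n:ℝ)+2) := by
    field_simp; ring
  have e2 : (1:ℝ) - 1/(2*(n:ℝ)+2) = (2*(n:ℝ)+1)/(2*(n:ℝ)+2) := by
    field_simp; ring
  have hn1 : ((n:ℝ)+1) ≠ 0 := by positivity
  have e5 : 2*((1:ℝ)/(2*(n:ℝ)+2)) = 1/((n:ℝ)+1) := by
    field_simp
  have hH : H (n+1) = H n + 1/((n:ℝ)+1) := by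
    unfold H
    rw [Finset.sum_range_succ]
  have e3 : ((n+1:ℕ):ℝ) + 1/2 = (2*(n:ℝ)+3)/2 := by push_cast; ring
  have e4 : ((n:ℕ):ℝ) + 1/2 = (2*(n:ℝ)+1)/2 := by ring
  unfold f
  rw [hH, e1, e2, e5, e3, e4,
    Real.log_div (by positivity) h1.ne', Real.log_div (by positivity) h1.ne',
    Real.log_div (by positivity) two_ne_zero, Real.log_div (by positivity) two_ne_zero]
  ring

lemma delta_bound (n : ℕ) (hn : 1 ≤ n) :
    |f n - f (n+1) - SS n| ≤ 8/3*(1/(2*(n:ℝ)+2))^11 := by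
  have hn1 : (1:ℝ) ≤ (n:ℝ) := by exact_mod_cast hn
  have h0 : (0:ℝ) < 1/(2*(n:ℝ)+2) := by positivity
  have h4 : (1:ℝ)/(2*(n:ℝ)+2) ≤ 1/4 := by
    rw [div_le_div_iff₀ (by linarith) (by norm_num)]; linarith
  have key := log_est (1/(2*(n:ℝ)+2)) h0 h4
  rw [delta_eq]
  unfold SS
  have e : Real.log (1 + 1/(2*(n:ℝ)+2)) - Real.log (1 - 1/(2*(n:ℝ)+2)) - 2*(1/(2*(n:ℝ)+2))
      - (2/3*(1/(2*(n:ℝ)+2))^3 + 2/5*(1/(2*(n:ℝ)+2))^5 + 2/7*(1/(2*(n:ℝ)+2))^7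
        + 2/9*(1/(2*(n:ℝ)+2))^9)
      = Real.log (1 + 1/(2*(n:ℝ)+2)) - Real.log (1 - 1/(2*(n:ℝ)+2))
      - (2*(1/(2*(n:ℝ)+2)) + 2/3*(1/(2*(n:ℝ)+2))^3 + 2/5*(1/(2*(n:ℝ)+2))^5
        + 2/7*(1/(2*(n:ℝ)+2))^7 + 2/9*(1/(2*(n:ℝ)+2))^9) := by ring
  rw [e]
  exact key

lemma delta_pos (n : ℕ) (hn : 1 ≤ n) : 0 < f n - f (n+1) := by
  have hn1 : (1:ℝ) ≤ (n:ℝ) := by exact_mod_cast hn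
  have h0 : (0:ℝ) < 1/(2*(n:ℝ)+2) := by positivity
  have h4 : (1:ℝ)/(2*(n:ℝ)+2) ≤ 1/4 := by
    rw [div_le_div_iff₀ (by linarith) (by norm_num)]; linarith
  have hb := (abs_le.1 (delta_bound n hn)).1
  have hSS : 8/3*(1/(2*(n:ℝ)+2))^11 < SS n := by
    unfold SS
    have h9 : (0:ℝ) < (1/(2*(n:ℝ)+2))^9 := pow_pos h0 9
    have h2 : (1/(2*(n:ℝ)+2))^2 ≤ 1/16 := by nlinarith
    have e11 : (1/(2*(n:ℝ)+2))^11 = (1/(2*(n:ℝ)+2))^9 * (1/(2*(n:ℝ)+2))^2 := by ring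
    nlinarith [pow_pos h0 3, pow_pos h0 5, pow_pos h0 7,
      mul_le_mul_of_nonneg_left h2 h9.le]
  linarith

lemma sum_u (v : ℝ) (hv : v ≠ 0) :
    2/3*(1/v)^3 + 2/5*(1/v)^5 + 2/7*(1/v)^7 + 2/9*(1/v)^9 + 8/3*(1/v)^11
      = (2/3*v^8+2/5*v^6+2/7*v^4+2/9*v^2+8/3)/v^11 := by
  field_simp

lemma sum_u' (v : ℝ) (hv : v ≠ 0) :
    2/3*(1/v)^3 + 2/5*(1/v)^5 + 2/7*(1/v)^7 + 2/9*(1/v)^9 - 8/3*(1/v)^11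
      = (2/3*v^8+2/5*v^6+2/7*v^4+2/9*v^2-8/3)/v^11 := by
  field_simp

lemma cond_a (k : ℕ) :
    SS (k+1) + 8/3*(1/(2*((k+1:ℕ):ℝ)+2))^11 ≤ hh (k+1) - hh (k+2) := by
  have hs0 : (0:ℝ) ≤ (k:ℝ) := Nat.cast_nonneg k
  have hv : (0:ℝ) < 2*((k:ℝ)+1)+2 := by linarith
  have hQx : (0:ℝ) < 24*((k:ℝ)+3/2)^4 + 21/5*((k:ℝ)+3/2)^2 - 2071/1400 := by
    nlinarith [pow_nonneg hs0 2, pow_nonneg hs0 3, pow_nonneg hs0 4]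
  have hQy : (0:ℝ) < 24*((k:ℝ)+5/2)^4 + 21/5*((k:ℝ)+5/2)^2 - 2071/1400 := by
    nlinarith [pow_nonneg hs0 2, pow_nonneg hs0 3, pow_nonneg hs0 4]
  have ev : 2*((k+1:ℕ):ℝ)+2 = 2*((k:ℝ)+1)+2 := by push_cast; ring
  have ex : ((k+1:ℕ):ℝ)+1/2 = (k:ℝ)+3/2 := by push_cast; ring
  have ey : ((k+2:ℕ):ℝ)+1/2 = (k:ℝ)+5/2 := by push_cast; ring
  simp only [SS, hh, Q]
  rw [ev, ex, ey, sum_u _ hv.ne', div_sub_div _ _ hQx.ne' hQy.ne',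
    div_le_div_iff₀ (by positivity) (mul_pos hQx hQy)]
  have cert : (((k:ℝ)+3/2)^2 * (24*((k:ℝ)+5/2)^4 + 21/5*((k:ℝ)+5/2)^2 - 2071/1400)
      - ((k:ℝ)+5/2)^2 * (24*((k:ℝ)+3/2)^4 + 21/5*((k:ℝ)+3/2)^2 - 2071/1400)) * (2*((k:ℝ)+1)+2)^11
      - (2/3*(2*((k:ℝ)+1)+2)^8+2/5*(2*((k:ℝ)+1)+2)^6+2/7*(2*((k:ℝ)+1)+2)^4
          +2/9*(2*((k:ℝ)+1)+2)^2+8/3)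
        * ((24*((k:ℝ)+3/2)^4 + 21/5*((k:ℝ)+3/2)^2 - 2071/1400)
            * (24*((k:ℝ)+5/2)^4 + 21/5*((k:ℝ)+5/2)^2 - 2071/1400))
      = (2305943978493523/77175000 + 2865428997756901/19293750*(k:ℝ) + 5132289620431649/15435000*(k:ℝ)^2 + 56791360151924/128625*(k:ℝ)^3 + 495253326923569/1286250*(k:ℝ)^4 + 105839458626488/459375*(k:ℝ)^5 + 44007421450234/459375*(k:ℝ)^6 + 2510839775104/91875*(k:ℝ)^7 + 470304202744/91875*(k:ℝ)^8 + 14212096/25*(k:ℝ)^9 + 3553024/125*(k:ℝ)^10) := by ring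
  have hc : (0:ℝ) ≤ (2305943978493523/77175000 + 2865428997756901/19293750*(k:ℝ) + 5132289620431649/15435000*(k:ℝ)^2 + 56791360151924/128625*(k:ℝ)^3 + 495253326923569/1286250*(k:ℝ)^4 + 105839458626488/459375*(k:ℝ)^5 + 44007421450234/459375*(k:ℝ)^6 + 2510839775104/91875*(k:ℝ)^7 + 470304202744/91875*(k:ℝ)^8 + 14212096/25*(k:ℝ)^9 + 3553024/125*(k:ℝ)^10) := by positivity
  linarith [cert, hc]

lemma cond_b (k : ℕ) :
    48*(((k+2:ℕ):ℝ)+1) * (hh (k+2) * hh (k+3))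
      < SS (k+2) - 8/3*(1/(2*((k+2:ℕ):ℝ)+2))^11 := by
  have hs0 : (0:ℝ) ≤ (k:ℝ) := Nat.cast_nonneg k
  have hv : (0:ℝ) < 2*((k:ℝ)+2)+2 := by linarith
  have hQx : (0:ℝ) < 24*((k:ℝ)+5/2)^4 + 21/5*((k:ℝ)+5/2)^2 - 2071/1400 := by
    nlinarith [pow_nonneg hs0 2, pow_nonneg hs0 3, pow_nonneg hs0 4]
  have hQy : (0:ℝ) < 24*((k:ℝ)+7/2)^4 + 21/5*((k:ℝ)+7/2)^2 - 2071/1400 := by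
    nlinarith [pow_nonneg hs0 2, pow_nonneg hs0 3, pow_nonneg hs0 4]
  have ev : 2*((k+2:ℕ):ℝ)+2 = 2*((k:ℝ)+2)+2 := by push_cast; ring
  have ex : ((k+2:ℕ):ℝ)+1/2 = (k:ℝ)+5/2 := by push_cast; ring
  have ey : ((k+3:ℕ):ℝ)+1/2 = (k:ℝ)+7/2 := by push_cast; ring
  have e48 : ((k+2:ℕ):ℝ)+1 = (k:ℝ)+3 := by push_cast; ring
  simp only [SS, hh, Q]
  rw [ev, ex, ey, e48, sum_u' _ hv.ne', div_mul_div_comm, ← mul_div_assoc,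
    div_lt_div_iff₀ (mul_pos hQx hQy) (by positivity)]
  have cert : (2/3*(2*((k:ℝ)+2)+2)^8+2/5*(2*((k:ℝ)+2)+2)^6+2/7*(2*((k:ℝ)+2)+2)^4
          +2/9*(2*((k:ℝ)+2)+2)^2-8/3)
        * ((24*((k:ℝ)+5/2)^4 + 21/5*((k:ℝ)+5/2)^2 - 2071/1400)
            * (24*((k:ℝ)+7/2)^4 + 21/5*((k:ℝ)+7/2)^2 - 2071/1400))
      - 48*((k:ℝ)+3) * (((k:ℝ)+5/2)^2 * (((k:ℝ)+7/2)^2)) * (2*((k:ℝ)+2)+2)^11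
      = (19353339877964177/12862500 + 92439386140169459/12862500*(k:ℝ) + 233166899450213671/15435000*(k:ℝ)^2 + 801806001425902/42875*(k:ℝ)^3 + 19672798390821691/1286250*(k:ℝ)^4 + 1339220089821156/153125*(k:ℝ)^5 + 1652140749172966/459375*(k:ℝ)^6 + 32887881898048/30625*(k:ℝ)^7 + 21262109269256/91875*(k:ℝ)^8 + 6149263872/175*(k:ℝ)^9 + 3124374272/875*(k:ℝ)^10 + 38172672/175*(k:ℝ)^11 + 1060352/175*(k:ℝ)^12) := by ring
  have hc : (0:ℝ) < (19353339877964177/12862500 + 92439386140169459/12862500*(k:ℝ) + 233166899450213671/15435000*(k:ℝ)^2 + 801806001425902/42875*(k:ℝ)^3 + 19672798390821691/1286250*(k:ℝ)^4 + 1339220089821156/153125*(k:ℝ)^5 + 1652140749172966/459375*(k:ℝ)^6 + 32887881898048/30625*(k:ℝ)^7 + 21262109269256/91875*(k:ℝ)^8 + 6149263872/175*(k:ℝ)^9 + 3124374272/875*(k:ℝ)^10 + 38172672/175*(k:ℝ)^11 + 1060352/175*(k:ℝ)^12) := by positivity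
  linarith [cert, hc]

lemma H_eq (n : ℕ) : H n = ((harmonic n : ℚ) : ℝ) := by
  unfold H harmonic
  push_cast
  simp [one_div]

lemma f_tendsto : Tendsto f atTop (𝓝 0) := by
  have h1 : Tendsto (fun n : ℕ => ((harmonic n : ℚ) : ℝ) - Real.log n
      - Real.eulerMascheroniConstant) atTop (𝓝 0) := by
    have := Real.tendsto_harmonic_sub_log.sub
      (tendsto_const_nhds (x := Real.eulerMascheroniConstant) (f := atTop))
    simpa using this
  have h3 : Tendsto (fun n : ℕ => (1:ℝ) + 1/(2*(n:ℝ))) atTop (𝓝 1) := by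
    have hz : Tendsto (fun n : ℕ => (1:ℝ)/(2*(n:ℝ))) atTop (𝓝 0) := by
      simp only [one_div]
      exact tendsto_inv_atTop_zero.comp
        (Tendsto.const_mul_atTop two_pos tendsto_natCast_atTop_atTop)
    simpa using (tendsto_const_nhds (x := (1:ℝ)) (f := atTop)).add hz
  have h4 : Tendsto (fun n : ℕ => Real.log (1 + 1/(2*(n:ℝ)))) atTop (𝓝 0) := by
    have := ((Real.continuousAt_log (by norm_num : (1:ℝ) ≠ 0)).tendsto).comp h3
    simpa [Function.comp_def] using this
  have h2 : Tendsto (fun n : ℕ => Real.log ((n:ℝ)+1/2) - Real.log n) atTop (𝓝 0) := by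
    apply h4.congr'
    filter_upwards [eventually_ge_atTop 1] with n hn
    have hn0 : (0:ℝ) < (n:ℝ) := by exact_mod_cast hn
    have e : (1:ℝ) + 1/(2*(n:ℝ)) = ((n:ℝ)+1/2)/(n:ℝ) := by
      field_simp
    rw [e, Real.log_div (by positivity) hn0.ne']
  have hmain : Tendsto (fun n : ℕ => (((harmonic n : ℚ) : ℝ) - Real.log n
      - Real.eulerMascheroniConstant) - (Real.log ((n:ℝ)+1/2) - Real.log n))
      atTop (𝓝 0) := by
    simpa using h1.sub h2
  apply hmain.congr
  intro n
  simp only [f]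
  rw [H_eq]
  ring

lemma hh_tendsto : Tendsto hh atTop (𝓝 0) := by
  apply squeeze_zero' (g := fun n : ℕ => 1/((n:ℝ)+1))
  · filter_upwards with n
    exact (hh_pos n).le
  · filter_upwards [eventually_ge_atTop 1] with n hn
    have hn1 : (1:ℝ) ≤ (n:ℝ) := by exact_mod_cast hn
    have hQ : (0:ℝ) < Q ((n:ℝ)+1/2) := Q_pos (by linarith)
    rw [hh, div_le_div_iff₀ hQ (by positivity)]
    unfold Q
    nlinarith [sq_nonneg ((n:ℝ)+1/2), pow_nonneg (by linarith : (0:ℝ) ≤ (n:ℝ)) 3,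
      pow_nonneg (by linarith : (0:ℝ) ≤ (n:ℝ)) 4]
  · exact tendsto_one_div_add_atTop_nhds_zero_nat

lemma f_le_hh (n : ℕ) (hn : 1 ≤ n) : f n ≤ hh n := by
  have mono : Monotone (fun k => f (k+1) - hh (k+1)) := by
    apply monotone_nat_of_le_succ
    intro k
    have h1 := (abs_le.1 (delta_bound (k+1) (by omega))).2
    have h2 := cond_a k
    show f (k+1) - hh (k+1) ≤ f (k+1+1) - hh (k+1+1)
    linarith
  have ht : Tendsto (fun k => f (k+1) - hh (k+1)) atTop (𝓝 0) := by
    have := (f_tendsto.sub hh_tendsto).comp (tendsto_add_atTop_nat 1)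
    simpa [Function.comp_def] using this
  obtain ⟨k, rfl⟩ : ∃ k, n = k+1 := ⟨n-1, by omega⟩
  have : f (k+1) - hh (k+1) ≤ 0 := mono.ge_of_tendsto ht k
  linarith

lemma f_pos (n : ℕ) (hn : 1 ≤ n) : 0 < f n := by
  have anti : Antitone (fun k => f (k+1)) := by
    apply antitone_nat_of_succ_le
    intro k
    have := delta_pos (k+1) (by omega)
    show f (k+1+1) ≤ f (k+1)
    linarith
  have ht : Tendsto (fun k => f (k+1)) atTop (𝓝 0) :=
    f_tendsto.comp (tendsto_add_atTop_nat 1)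
  have h0 : 0 ≤ f (n+1) := anti.le_of_tendsto ht n
  have := delta_pos n hn
  linarith

lemma main_ineq (n : ℕ) (hn : 1 ≤ n) :
    48*((n:ℝ)+1)*(f n * f (n+1)) < f n - f (n+1) := by
  match n, hn with
  | 1, _ =>
    have hb : f 2 ≤ hh 2 := f_le_hh 2 (by omega)
    have hf2 : 0 < f 2 := f_pos 2 (by omega)
    have hd := delta_bound 1 (by omega)
    have e14 : (1:ℝ)/(2*((1:ℕ):ℝ)+2) = 1/4 := by norm_num
    rw [e14] at hd
    have hSS1 : SS 1 = 2/3*(1/4:ℝ)^3 + 2/5*(1/4:ℝ)^5 + 2/7*(1/4:ℝ)^7 + 2/9*(1/4:ℝ)^9 := by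
      simp only [SS]
      norm_num
    rw [hSS1] at hd
    obtain ⟨hd1, hd2⟩ := abs_le.1 hd
    have hf1 : f 1 ≤ hh 2 + (2/3*(1/4:ℝ)^3 + 2/5*(1/4:ℝ)^5 + 2/7*(1/4:ℝ)^7 + 2/9*(1/4:ℝ)^9
        + 8/3*(1/4:ℝ)^11) := by linarith
    have hprod : f 1 * f 2 ≤ (hh 2 + (2/3*(1/4:ℝ)^3 + 2/5*(1/4:ℝ)^5 + 2/7*(1/4:ℝ)^7
        + 2/9*(1/4:ℝ)^9 + 8/3*(1/4:ℝ)^11)) * hh 2 :=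
      mul_le_mul hf1 hb hf2.le (add_nonneg (hh_pos 2).le (by positivity))
    have hnum : 96 * ((hh 2 + (2/3*(1/4:ℝ)^3 + 2/5*(1/4:ℝ)^5 + 2/7*(1/4:ℝ)^7
        + 2/9*(1/4:ℝ)^9 + 8/3*(1/4:ℝ)^11)) * hh 2)
        < 2/3*(1/4:ℝ)^3 + 2/5*(1/4:ℝ)^5 + 2/7*(1/4:ℝ)^7 + 2/9*(1/4:ℝ)^9 - 8/3*(1/4:ℝ)^11 := by
      simp only [hh, Q]
      norm_num
    have e48 : 48*(((1:ℕ):ℝ)+1) = 96 := by norm_num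
    rw [e48]
    nlinarith [hprod, hnum, hd1]
  | (k+2), _ =>
    have hb : f (k+3) ≤ hh (k+3) := f_le_hh (k+3) (by omega)
    have ha : f (k+2) ≤ hh (k+2) := f_le_hh (k+2) (by omega)
    have hf3 : 0 < f (k+3) := f_pos (k+3) (by omega)
    have hprod : f (k+2) * f (k+3) ≤ hh (k+2) * hh (k+3) :=
      mul_le_mul ha hb hf3.le (hh_pos _).le
    have hcb := cond_b k
    have hd := (abs_le.1 (delta_bound (k+2) (by omega))).1
    have hcoef : (0:ℝ) ≤ 48*(((k+2:ℕ):ℝ)+1) := by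
      have := Nat.cast_nonneg (α := ℝ) (k+2)
      linarith
    nlinarith [mul_le_mul_of_nonneg_left hprod hcoef]

lemma step (n : ℕ) (hn : 1 ≤ n) : d n < d (n+1) := by
  have hfn1 : 0 < f (n+1) := f_pos (n+1) (by omega)
  have hdp := delta_pos n hn
  have hfn : 0 < f n := f_pos n hn
  have key := main_ineq n hn
  have e1 : d (n+1) - d n = (f n - f (n+1))/(f n * f (n+1)) - 48*((n:ℝ)+1) := by
    rw [d_eq, d_eq]
    push_cast
    field_simp [hfn.ne', hfn1.ne']
    ring
  have e2 : 48*((n:ℝ)+1) < (f n - f (n+1))/(f n * f (n+1)) := by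
    rw [lt_div_iff₀ (mul_pos hfn hfn1)]
    linarith
  linarith

end Stmt5Aux

theorem stmt5 (m n : ℕ) (hm : 1 ≤ m) (hmn : m < n) : d m < d n := by
  induction n with
  | zero => omega
  | succ k ih =>
    rcases Nat.lt_or_ge m k with h | h
    · exact lt_trans (ih h) (Stmt5Aux.step k (by omega))
    · have : m = k := by omega
      subst this
      exact Stmt5Aux.step m hm
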